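/- For every complex number s with Re(s) > 2, ∑_{n=1}^∞ Φ(n)/nˢ = ζ(s−1) − ζ(s)·(1 + 2^{−s}) − ζ(s) · ∑_{n=2}^∞ φ(n) (n+1)^{−s}, where ζ is the Riemann zeta function. -/

import Mathlib

open Finset Filter MeasureTheory

/-- The Euler totient function with the convention `φ(0) = 1`. -/
def phi0 : ℕ → ℤ := fun n => if n = 0 then 1 else (Nat.totient n : ℤ)

/-- `Φ(n) = ∑_{d | n} (φ(d) − φ(d−1))`, the sum over positive divisors `d` of `n`. -/
def PhiFun (n : ℕ) : ℤ := ∑ d ∈ n.divisors, (phi0 d - phi0 (d - 1))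

open LSeries ArithmeticFunction Complex
open scoped LSeries.notation

namespace Stmt11Aux

/-- ℕ-valued version of `phi0`. -/
def phi0' : ℕ → ℕ := fun n => if n = 0 then 1 else Nat.totient n

lemma phi0_eq (n : ℕ) : phi0 n = (phi0' n : ℤ) := by
  unfold phi0 phi0'; split <;> simp

lemma phi0'_le (n : ℕ) : phi0' n ≤ n + 1 := by
  unfold phi0'
  split
  · omega
  · exact (Nat.totient_le n).trans (Nat.le_succ n)

/-- The totient as a function `ℕ → ℂ`. -/
noncomputable def tot : ℕ → ℂ := fun n => (Nat.totient n : ℂ)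

/-- `g n = phi0 (n-1)` for `n ≥ 1`, `g 0 = 0`. -/
noncomputable def gfun : ℕ → ℂ := fun n => if n = 0 then 0 else (phi0' (n - 1) : ℂ)

noncomputable def ffun : ℕ → ℂ := tot - gfun

lemma tot_summable {s : ℂ} (hs : 2 < s.re) : LSeriesSummable tot s := by
  refine LSeriesSummable_of_le_const_mul_rpow (x := 2) hs ⟨1, fun n hn => ?_⟩
  rw [tot, Complex.norm_natCast, one_mul]
  have : ((2:ℝ) - 1) = 1 := by norm_num
  rw [this, Real.rpow_one]
  exact_mod_cast Nat.totient_le n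

lemma gfun_summable {s : ℂ} (hs : 2 < s.re) : LSeriesSummable gfun s := by
  refine LSeriesSummable_of_le_const_mul_rpow (x := 2) hs ⟨1, fun n hn => ?_⟩
  rw [gfun, if_neg hn, Complex.norm_natCast, one_mul]
  have : ((2:ℝ) - 1) = 1 := by norm_num
  rw [this, Real.rpow_one]
  have h1 : phi0' (n - 1) ≤ n := by
    have := phi0'_le (n - 1)
    omega
  exact_mod_cast h1

lemma ffun_summable {s : ℂ} (hs : 2 < s.re) : LSeriesSummable ffun s :=
  (tot_summable hs).sub (gfun_summable hs)

lemma conv_eq (n : ℕ) (hn : n ≠ 0) : (1 ⍟ ffun) n = (PhiFun n : ℂ) := by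
  simp only [LSeries.convolution_def]
  rw [Nat.sum_divisorsAntidiagonal' (f := fun a b => (1 : ℕ → ℂ) a * ffun b)]
  simp only [Pi.one_apply, one_mul]
  rw [PhiFun]
  push_cast
  refine Finset.sum_congr rfl fun d hd => ?_
  have hd0 : d ≠ 0 := (Nat.mem_divisors.mp hd).2 |> fun h => Nat.pos_of_mem_divisors hd |>.ne'
  rw [ffun, Pi.sub_apply, tot, gfun, if_neg hd0, phi0_eq, phi0_eq]
  simp [phi0', hd0]

lemma conv_tot_eq (n : ℕ) : (1 ⍟ tot) n = (n : ℂ) := by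
  rcases eq_or_ne n 0 with rfl | hn
  · simp [LSeries.convolution_map_zero]
  · simp only [LSeries.convolution_def]
    rw [Nat.sum_divisorsAntidiagonal' (f := fun a b => (1 : ℕ → ℂ) a * tot b)]
    simp only [Pi.one_apply, one_mul, tot]
    rw [← Nat.cast_sum, Nat.sum_totient]

lemma LSeries_nat_eq {s : ℂ} (hs : 2 < s.re) :
    LSeries (fun n => (n : ℂ)) s = riemannZeta (s - 1) := by
  have hs1 : 1 < (s - 1).re := by simp [Complex.sub_re]; linarith
  rw [← LSeries_one_eq_riemannZeta hs1]
  refine tsum_congr fun n => ?_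
  rcases eq_or_ne n 0 with rfl | hn
  · simp [LSeries.term_zero]
  · rw [LSeries.term_of_ne_zero hn, LSeries.term_of_ne_zero hn, Pi.one_apply]
    have hn0 : (n : ℂ) ≠ 0 := Nat.cast_ne_zero.mpr hn
    rw [Complex.cpow_sub _ _ hn0, Complex.cpow_one, one_div_div]

theorem main (s : ℂ) (hs : 2 < s.re) :
    ∑' m : ℕ, (PhiFun (m + 1) : ℂ) / ((m + 1 : ℕ) : ℂ) ^ s
      = riemannZeta (s - 1) - riemannZeta s * (1 + (2 : ℂ) ^ (-s))
        - riemannZeta s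
          * ∑' m : ℕ, (Nat.totient (m + 2) : ℂ) * ((m + 2 + 1 : ℕ) : ℂ) ^ (-s) := by
  have hs1 : 1 < s.re := by linarith
  have h1 : LSeriesSummable 1 s := LSeriesSummable_one_iff.mpr hs1
  have hg := gfun_summable hs
  have hf := ffun_summable hs
  have hconv : LSeriesSummable (1 ⍟ ffun) s :=
    (h1.LSeriesHasSum.convolution hf.LSeriesHasSum).LSeriesSummable
  -- Step 1: LHS = LSeries (1 ⍟ ffun) s
  have hLHS : ∑' m : ℕ, (PhiFun (m + 1) : ℂ) / ((m + 1 : ℕ) : ℂ) ^ s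
      = LSeries (1 ⍟ ffun) s := by
    rw [LSeries, Summable.tsum_eq_zero_add hconv, LSeries.term_zero, zero_add]
    refine tsum_congr fun m => ?_
    rw [LSeries.term_of_ne_zero (Nat.succ_ne_zero m), conv_eq _ (Nat.succ_ne_zero m)]
  -- Step 2: LSeries (1 ⍟ ffun) s = ζ(s-1) - ζ(s) * LSeries gfun s
  have hstep2 : LSeries (1 ⍟ ffun) s
      = riemannZeta (s - 1) - riemannZeta s * LSeries gfun s := by
    rw [LSeries_convolution' h1 hf]
    have : LSeries ffun s = LSeries tot s - LSeries gfun s :=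
      LSeries_sub (tot_summable hs) hg
    rw [this, mul_sub]
    congr 1
    · rw [← LSeries_convolution' h1 (tot_summable hs), ← LSeries_nat_eq hs]
      exact congrFun (congrArg LSeries (funext conv_tot_eq)) s
    · rw [LSeries_one_eq_riemannZeta hs1]
  -- Step 3: LSeries gfun s = 1 + 2^(-s) + T
  have hT : LSeries gfun s
      = 1 + (2 : ℂ) ^ (-s)
        + ∑' m : ℕ, (Nat.totient (m + 2) : ℂ) * ((m + 2 + 1 : ℕ) : ℂ) ^ (-s) := by
    have hg1 : Summable fun n => LSeries.term gfun s (n + 1) :=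
      (summable_nat_add_iff 1).mpr hg
    have hg2 : Summable fun n => LSeries.term gfun s (n + 2) :=
      (summable_nat_add_iff 2).mpr hg
    rw [LSeries, Summable.tsum_eq_zero_add hg, LSeries.term_zero, zero_add,
      Summable.tsum_eq_zero_add hg1, Summable.tsum_eq_zero_add hg2]
    have ht1 : LSeries.term gfun s (0 + 1) = 1 := by
      rw [LSeries.term_of_ne_zero (by norm_num), gfun]
      norm_num [phi0']
    have ht2 : LSeries.term gfun s (0 + 1 + 1) = (2 : ℂ) ^ (-s) := by
      rw [LSeries.term_of_ne_zero (by norm_num), gfun]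
      norm_num [phi0', Nat.totient_one, Complex.cpow_neg, one_div]
    rw [ht1, ht2]
    have ht3 : ∀ m : ℕ, LSeries.term gfun s (m + 1 + 1 + 1)
        = (Nat.totient (m + 2) : ℂ) * ((m + 2 + 1 : ℕ) : ℂ) ^ (-s) := by
      intro m
      rw [LSeries.term_of_ne_zero (by omega), gfun, if_neg (by omega)]
      have h1 : m + 1 + 1 + 1 - 1 = m + 2 := by omega
      have h2 : m + 1 + 1 + 1 = m + 2 + 1 := by omega
      rw [h1, h2, phi0', if_neg (by omega), Complex.cpow_neg, div_eq_mul_inv]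
    rw [tsum_congr ht3]
    ring
  rw [hLHS, hstep2, hT]
  ring

end Stmt11Aux

/-- For `Re(s) > 2`,
`∑_{n=1}^∞ Φ(n)/nˢ = ζ(s−1) − ζ(s)(1 + 2^{−s}) − ζ(s) ∑_{n=2}^∞ φ(n)(n+1)^{−s}`
(the first series is indexed by `n = m + 1`, the last by `n = m + 2`, `m : ℕ`). -/
theorem stmt11 (s : ℂ) (hs : 2 < s.re) :
    ∑' m : ℕ, (PhiFun (m + 1) : ℂ) / ((m + 1 : ℕ) : ℂ) ^ s
      = riemannZeta (s - 1) - riemannZeta s * (1 + (2 : ℂ) ^ (-s))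
        - riemannZeta s
          * ∑' m : ℕ, (Nat.totient (m + 2) : ℂ) * ((m + 2 + 1 : ℕ) : ℂ) ^ (-s) := by
  exact Stmt11Aux.main s hs
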